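/- Let B be a unital C*-algebra, let B₀ and B₁ be unital C*-subalgebras of B (containing the unit of B), and let A := {f ∈ C([0,1], B) : f(0) ∈ B₀ and f(1) ∈ B₁}, a unital C*-subalgebra of C([0,1], B). If A admits a character, then B₀ admits a character or B₁ admits a character. -/

import Mathlib

set_option maxHeartbeats 1000000
set_option synthInstance.maxHeartbeats 1000000
set_option linter.unusedSectionVars false

noncomputable section

variable {B : Type*} [NormedRing B] [StarRing B] [CStarRing B]
  [NormedAlgebra ℂ B] [CompleteSpace B] [StarModule ℂ B]

/-- The subalgebra `A = {f ∈ C([0,1], B) : f(0) ∈ B₀ and f(1) ∈ B₁}` of `C([0,1], B)`. -/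
def endpointsSubalgebra (B₀ B₁ : StarSubalgebra ℂ B) :
    Subalgebra ℂ C(unitInterval, B) where
  carrier := {f | f 0 ∈ B₀ ∧ f 1 ∈ B₁}
  mul_mem' := fun hf hg =>
    ⟨by simpa using mul_mem hf.1 hg.1, by simpa using mul_mem hf.2 hg.2⟩
  add_mem' := fun hf hg =>
    ⟨by simpa using add_mem hf.1 hg.1, by simpa using add_mem hf.2 hg.2⟩
  algebraMap_mem' := fun c =>
    ⟨by simpa [Algebra.algebraMap_eq_smul_one] using B₀.algebraMap_mem c,
     by simpa [Algebra.algebraMap_eq_smul_one] using B₁.algebraMap_mem c⟩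

/-- Scalar continuous functions, included in `endpointsSubalgebra`. -/
def iotaEl (B₀ B₁ : StarSubalgebra ℂ B) (g : C(unitInterval, ℂ)) :
    endpointsSubalgebra B₀ B₁ :=
  ⟨⟨fun t => g t • (1 : B), by fun_prop⟩,
    ⟨SMulMemClass.smul_mem _ (one_mem B₀), SMulMemClass.smul_mem _ (one_mem B₁)⟩⟩

lemma iota_mul (B₀ B₁ : StarSubalgebra ℂ B) (g h : C(unitInterval, ℂ)) :
    iotaEl B₀ B₁ (g * h) = iotaEl B₀ B₁ g * iotaEl B₀ B₁ h := by
  apply Subtype.ext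
  ext t
  show (g t * h t) • (1 : B) = (g t • 1) * (h t • 1)
  rw [smul_mul_smul_comm, one_mul]

lemma iota_one (B₀ B₁ : StarSubalgebra ℂ B) : iotaEl B₀ B₁ 1 = 1 := by
  apply Subtype.ext
  ext t
  show (1 : ℂ) • (1 : B) = 1
  simp

lemma iota_add (B₀ B₁ : StarSubalgebra ℂ B) (g h : C(unitInterval, ℂ)) :
    iotaEl B₀ B₁ (g + h) = iotaEl B₀ B₁ g + iotaEl B₀ B₁ h := by
  apply Subtype.ext
  ext t
  show (g t + h t) • (1 : B) = g t • 1 + h t • 1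
  rw [add_smul]

lemma iota_smul (B₀ B₁ : StarSubalgebra ℂ B) (c : ℂ) (g : C(unitInterval, ℂ)) :
    iotaEl B₀ B₁ (c • g) = c • iotaEl B₀ B₁ g := by
  apply Subtype.ext
  ext t
  show (c * g t) • (1 : B) = c • (g t • 1)
  rw [mul_smul]

set_option synthInstance.maxHeartbeats 1000000 in
/-- Auxiliary: from a character `φ` of `A` "located at `t₀`" and a bump function `h`
with `h t₀ = 1` making `t ↦ h t • b` land in `A` for `b ∈ S`, get a character of `S`. -/
lemma aux {B₀ B₁ : StarSubalgebra ℂ B} (S : StarSubalgebra ℂ B)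
    (φ : endpointsSubalgebra B₀ B₁ →ₐ[ℂ] ℂ) (t₀ : unitInterval)
    (hφ : ∀ g : C(unitInterval, ℂ), φ (iotaEl B₀ B₁ g) = g t₀)
    (h : C(unitInterval, ℂ)) (ht₀ : h t₀ = 1)
    (hmem : ∀ b : B, b ∈ S → h 0 • b ∈ B₀ ∧ h 1 • b ∈ B₁) :
    Nonempty (S →ₐ[ℂ] ℂ) := by
  set F : S → endpointsSubalgebra B₀ B₁ := fun b =>
    ⟨⟨fun t => h t • (b : B), by fun_prop⟩, hmem b b.2⟩ with hF
  have hFmul : ∀ b c : S, F b * F c = iotaEl B₀ B₁ h * F (b * c) := by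
    intro b c
    apply Subtype.ext
    ext t
    show (h t • (b : B)) * (h t • (c : B)) = (h t • (1 : B)) * (h t • ((b : B) * c))
    rw [smul_mul_smul_comm, smul_mul_smul_comm, one_mul]
  refine ⟨{ toFun := fun b => φ (F b)
            map_one' := ?_
            map_mul' := ?_
            map_zero' := ?_
            map_add' := ?_
            commutes' := ?_ }⟩
  · show φ (F 1) = 1
    have : F 1 = iotaEl B₀ B₁ h := by
      apply Subtype.ext; ext t; rfl
    rw [this, hφ, ht₀]
  · intro b c
    show φ (F (b * c)) = φ (F b) * φ (F c)
    have := congrArg φ (hFmul b c)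
    rw [map_mul, map_mul, hφ, ht₀, one_mul] at this
    rw [← this]
  · show φ (F 0) = 0
    have : F 0 = 0 := by
      apply Subtype.ext; ext t
      show h t • (0 : B) = 0
      simp
    rw [this, map_zero]
  · intro b c
    show φ (F (b + c)) = φ (F b) + φ (F c)
    have : F (b + c) = F b + F c := by
      apply Subtype.ext; ext t
      show h t • ((b : B) + c) = h t • (b : B) + h t • c
      rw [smul_add]
    rw [this, map_add]
  · intro c
    show φ (F (algebraMap ℂ S c)) = algebraMap ℂ ℂ c
    have : F (algebraMap ℂ S c) = c • iotaEl B₀ B₁ h := by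
      apply Subtype.ext; ext t
      show h t • ((algebraMap ℂ S c : S) : B) = c • (h t • (1 : B))
      rw [smul_comm]
      congr 1
      simp [Algebra.algebraMap_eq_smul_one]
    rw [this, map_smul, hφ, ht₀]
    simp [Algebra.algebraMap_eq_smul_one]

/-- If `A = {f ∈ C([0,1], B) : f(0) ∈ B₀, f(1) ∈ B₁}` admits a
character, then `B₀` admits a character or `B₁` admits a character. -/
theorem stmt5 (B₀ B₁ : StarSubalgebra ℂ B)
    (h₀ : IsClosed (B₀ : Set B)) (h₁ : IsClosed (B₁ : Set B))
    (hA : Nonempty (endpointsSubalgebra B₀ B₁ →ₐ[ℂ] ℂ)) :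
    Nonempty (B₀ →ₐ[ℂ] ℂ) ∨ Nonempty (B₁ →ₐ[ℂ] ℂ) := by
  obtain ⟨φ⟩ := hA
  -- build the character of C(I, ℂ)
  set χ : C(unitInterval, ℂ) →ₐ[ℂ] ℂ :=
    { toFun := fun g => φ (iotaEl B₀ B₁ g)
      map_one' := by show φ (iotaEl B₀ B₁ 1) = 1; rw [iota_one, map_one]
      map_mul' := fun g h => by
        show φ (iotaEl B₀ B₁ (g * h)) = φ (iotaEl B₀ B₁ g) * φ (iotaEl B₀ B₁ h)
        rw [iota_mul, map_mul]
      map_zero' := by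
        show φ (iotaEl B₀ B₁ 0) = 0
        have : iotaEl B₀ B₁ 0 = 0 := by
          apply Subtype.ext; ext t
          show (0 : ℂ) • (1 : B) = 0
          simp
        rw [this, map_zero]
      map_add' := fun g h => by
        show φ (iotaEl B₀ B₁ (g + h)) = φ (iotaEl B₀ B₁ g) + φ (iotaEl B₀ B₁ h)
        rw [iota_add, map_add]
      commutes' := fun c => by
        show φ (iotaEl B₀ B₁ (algebraMap ℂ C(unitInterval, ℂ) c)) = algebraMap ℂ ℂ c
        have : iotaEl B₀ B₁ (algebraMap ℂ C(unitInterval, ℂ) c) = algebraMap ℂ _ c := by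
          apply Subtype.ext; ext t
          show (c : ℂ) • (1 : B) = _
          simp [Algebra.algebraMap_eq_smul_one]
        rw [this, AlgHom.commutes] } with hχ
  obtain ⟨t₀, ht₀⟩ := (WeakDual.CharacterSpace.homeoEval unitInterval ℂ).surjective
    (WeakDual.CharacterSpace.equivAlgHom.symm χ)
  have hφ : ∀ g : C(unitInterval, ℂ), φ (iotaEl B₀ B₁ g) = g t₀ := by
    intro g
    have h2 := congrFun (congrArg (fun ψ : WeakDual.characterSpace ℂ C(unitInterval, ℂ) =>
      (ψ : C(unitInterval, ℂ) → ℂ)) ht₀) g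
    simp only [WeakDual.CharacterSpace.equivAlgHom_symm_coe, hχ] at h2
    exact h2.symm
  by_cases ht : t₀ = 1
  · -- character of B₁ via h t = t
    subst ht
    refine Or.inr (aux B₁ φ 1 hφ ⟨fun t => (t : ℝ), by fun_prop⟩ (by norm_num) ?_)
    intro b hb
    constructor
    · show (((((0 : unitInterval) : ℝ)) : ℂ)) • b ∈ B₀
      norm_num
    · show (((((1 : unitInterval) : ℝ)) : ℂ)) • b ∈ B₁
      norm_num
      exact hb
  · -- character of B₀ via h t = (1-t)/(1-t₀)
    have hne : (1 : ℝ) - (t₀ : ℝ) ≠ 0 := by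
      have := unitInterval.le_one t₀
      intro hc
      exact ht (Subtype.ext (by simp only [Set.Icc.coe_one]; linarith))
    refine Or.inl (aux B₀ φ t₀ hφ ⟨fun t => ((1 - (t : ℝ)) / (1 - (t₀ : ℝ)) : ℝ),
      by fun_prop⟩ ?_ ?_)
    · show (((1 - (t₀ : ℝ)) / (1 - (t₀ : ℝ)) : ℝ) : ℂ) = 1
      rw [div_self hne]; norm_num
    · intro b hb
      constructor
      · show ((((1 - ((0 : unitInterval) : ℝ)) / (1 - (t₀ : ℝ)) : ℝ)) : ℂ) • b ∈ B₀
        exact SMulMemClass.smul_mem _ hb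
      · show ((((1 - ((1 : unitInterval) : ℝ)) / (1 - (t₀ : ℝ)) : ℝ)) : ℂ) • b ∈ B₁
        norm_num
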